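/- Let H be a graph and r ≥ 1 an integer. If H is r-Ramsey-finite, i.e., the set M_r(H) of r-Ramsey-minimal graphs for H is finite, then there exists a constant c = c(H,r), independent of G, such that for every graph G with G →_r H and every positive integer t, the blowup Ramsey number satisfies B_r(G → H; t) ≤ c^t. -/

import Mathlib

/-- The `n`-blowup of a graph: each vertex is replaced by an independent set of `n` vertices,
and each edge by a complete bipartite graph between the corresponding sets. -/
def blowupGraph {V : Type} (G : SimpleGraph V) (n : ℕ) : SimpleGraph (V × Fin n) :=
  SimpleGraph.comap Prod.fst G

/-- The coloring `C` admits a monochromatic copy of `H` in `G`. -/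
def HasMonoCopy {V α : Type} (G : SimpleGraph V) (H : SimpleGraph α) {r : ℕ}
    (C : Sym2 V → Fin r) : Prop :=
  ∃ (f : α → V) (c : Fin r), Function.Injective f ∧
    ∀ a b, H.Adj a b → G.Adj (f a) (f b) ∧ C s(f a, f b) = c

/-- `G →_r H`: every `r`-coloring of the edges of `G` contains a monochromatic copy of `H`. -/
def ArrowsFor {V α : Type} (G : SimpleGraph V) (H : SimpleGraph α) (r : ℕ) : Prop :=
  ∀ C : Sym2 V → Fin r, HasMonoCopy G H C

/-- The coloring `C` of `G[n]` admits a monochromatic canonical copy of `H[t]`: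
an embedding `φ` of `H` into `G`, together with `t` blowup vertices `ψ a` in the part indexed
by `φ a` for each vertex `a` of `H`, all of whose blowup edges receive the same color `c`. -/
def HasMonoCanonicalBlowup {V α : Type} (G : SimpleGraph V) (H : SimpleGraph α)
    (n t r : ℕ) (C : Sym2 (V × Fin n) → Fin r) : Prop :=
  ∃ (φ : α → V) (ψ : α → Fin t → Fin n) (c : Fin r),
    Function.Injective φ ∧ (∀ a, Function.Injective (ψ a)) ∧
    ∀ a b, H.Adj a b → G.Adj (φ a) (φ b) ∧ ∀ i j, C s((φ a, ψ a i), (φ b, ψ b j)) = c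

/-- Every `r`-coloring of the edges of `G[n]` contains a monochromatic canonical copy of `H[t]`.
The blowup Ramsey number `B_r(G → H; t)` is the minimum such `n`. -/
def BlowupArrow {V α : Type} (G : SimpleGraph V) (H : SimpleGraph α) (r n t : ℕ) : Prop :=
  ∀ C : Sym2 (V × Fin n) → Fin r, HasMonoCanonicalBlowup G H n t r C

/-- `G` is `r`-Ramsey-minimal for `H`: `G →_r H` but no proper subgraph of `G` arrows `H`. -/
def RamseyMinimalFor {V α : Type} (G : SimpleGraph V) (H : SimpleGraph α) (r : ℕ) : Prop :=
  ArrowsFor G H r ∧ ∀ G' : G.Subgraph, G' ≠ ⊤ → ¬ ArrowsFor G'.coe H r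

lemma arrows_of_equiv {V W α : Type} {G : SimpleGraph V} {G' : SimpleGraph W}
    {H : SimpleGraph α} {r : ℕ} (e : V ≃ W)
    (hadj : ∀ x y, G.Adj x y ↔ G'.Adj (e x) (e y))
    (h : ArrowsFor G H r) : ArrowsFor G' H r := by
  intro D
  obtain ⟨f, c, hinj, hf⟩ := h (fun s2 => D (s2.map e))
  refine ⟨fun a => e (f a), c, fun a b hab => e.injective.eq_iff.mp hab |> hinj, ?_⟩
  intro a b hab
  refine ⟨(hadj _ _).mp (hf a b hab).1, ?_⟩
  have h2 := (hf a b hab).2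
  simp only [] at h2
  rw [Sym2.map_pair_eq] at h2
  exact h2

lemma max_fiber' {β γ : Type*} [DecidableEq γ] (s : Finset β) (t : Finset γ) (g : β → γ)
    (hmap : ∀ b ∈ s, g b ∈ t) (ht : t.Nonempty) :
    ∃ y ∈ t, s.card ≤ t.card * (s.filter (fun b => g b = y)).card := by
  obtain ⟨y, hyt, hy⟩ := Finset.exists_max_image t (fun y => (s.filter (fun b => g b = y)).card) ht
  refine ⟨y, hyt, ?_⟩
  calc s.card = ∑ y' ∈ t, (s.filter (fun b => g b = y')).card :=
        Finset.card_eq_sum_card_fiberwise hmap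
    _ ≤ t.card • (s.filter (fun b => g b = y)).card :=
        Finset.sum_le_card_nsmul t _ _ (fun x hx => hy x hx)
    _ = t.card * (s.filter (fun b => g b = y)).card := by rw [smul_eq_mul]

lemma card_le_image_mul {β γ : Type*} [DecidableEq γ] (s : Finset β) (g : β → γ) (n : ℕ)
    (h : ∀ y ∈ s.image g, (s.filter (fun b => g b = y)).card ≤ n) :
    s.card ≤ (s.image g).card * n := by
  calc s.card = ∑ y ∈ s.image g, (s.filter (fun b => g b = y)).card :=
        Finset.card_eq_sum_card_fiberwise (fun x hx => Finset.mem_image_of_mem g hx)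
    _ ≤ (s.image g).card • n := Finset.sum_le_card_nsmul _ _ _ h
    _ = (s.image g).card * n := by rw [smul_eq_mul]

lemma core {α U : Type} [Fintype α] [Fintype U] [Nonempty α] (H : SimpleGraph α)
    (F : SimpleGraph U) {r : ℕ} (hr : 1 ≤ r) (hA : ArrowsFor F H r) (t : ℕ) (ht : 1 ≤ t) :
    BlowupArrow F H r
      ((2 * (Fintype.card U ^ Fintype.card α * r) + 2) ^
        ((Fintype.card U ^ Fintype.card α * r) * (t * Fintype.card α - 1) + 2)) t := by
  classical
  have hNU : Nonempty U := by
    obtain ⟨f, c, hinj, _⟩ := hA (fun _ => ⟨0, hr⟩)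
    exact ⟨f (Classical.arbitrary α)⟩
  haveI : Nonempty (Fin r) := ⟨⟨0, hr⟩⟩
  haveI := hNU
  set h := Fintype.card α with hh
  have hpos : 0 < h := Fintype.card_pos
  set p := Fintype.card U ^ Fintype.card α * r with hp
  have hPatcard : Fintype.card ((α → U) × Fin r) = p := by
    rw [Fintype.card_prod, Fintype.card_fun, Fintype.card_fin]
  have hppos : 0 < p := by
    rw [hp]
    exact Nat.mul_pos (Nat.pow_pos Fintype.card_pos) hr
  set S := p * (t * h - 1) + 1 with hS
  set n := (2 * p + 2) ^ (p * (t * h - 1) + 2) with hn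
  have hnS : n = (2 * p + 2) ^ (S + 1) := by rw [hn, hS]
  have hn1 : 0 < n := by rw [hn]; exact pow_pos (by omega) _
  intro C
  set eα := Fintype.equivFin α with heα
  set aof : ℕ → α := fun j => eα.symm ⟨j % h, Nat.mod_lt j hpos⟩ with haofdef
  -- choose patterns
  have hex : ∀ χ : U → Fin n, ∃ fc : (α → U) × Fin r, Function.Injective fc.1 ∧
      ∀ a b, H.Adj a b → F.Adj (fc.1 a) (fc.1 b) ∧
        C s((fc.1 a, χ (fc.1 a)), (fc.1 b, χ (fc.1 b))) = fc.2 := by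
    intro χ
    obtain ⟨f, c, hinj, hf⟩ := hA (fun e => C (e.map (fun u => (u, χ u))))
    refine ⟨(f, c), hinj, fun a b hab => ⟨(hf a b hab).1, ?_⟩⟩
    have h2 := (hf a b hab).2
    simp only [] at h2
    rw [Sym2.map_pair_eq] at h2
    exact h2
  choose pat hpat1 hpat2 using hex
  -- extraction of a finished pattern
  have EXTRACT : ∀ (π : (α → U) × Fin r) (Lπ : ℕ) (σπ : ℕ → Fin n),
      t * h ≤ Lπ →
      Function.Injective π.1 →
      (∀ a b, H.Adj a b → F.Adj (π.1 a) (π.1 b)) →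
      (∀ i j, i < j → j < Lπ → H.Adj (aof i) (aof j) →
        C s((π.1 (aof i), σπ i), (π.1 (aof j), σπ j)) = π.2) →
      (∀ i j, i < j → j < Lπ → aof i = aof j → σπ i ≠ σπ j) →
      HasMonoCanonicalBlowup F H n t r C := by
    intro π Lπ σπ hL hinj hFadj hJ2 hJ4
    have hslotlt : ∀ (a : α) (i : Fin t), (eα a : ℕ) + (i : ℕ) * h < t * h := by
      intro a i
      have h1 : (eα a : ℕ) < h := (eα a).2
      have h2 : (i : ℕ) + 1 ≤ t := i.2
      calc (eα a : ℕ) + (i : ℕ) * h < h + (i : ℕ) * h := by omega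
        _ = ((i : ℕ) + 1) * h := by ring
        _ ≤ t * h := Nat.mul_le_mul h2 le_rfl
    have haof : ∀ (a : α) (i : Fin t), aof ((eα a : ℕ) + (i : ℕ) * h) = a := by
      intro a i
      rw [haofdef]
      simp only []
      have hfin : (⟨((eα a : ℕ) + (i : ℕ) * h) % h, Nat.mod_lt _ hpos⟩ : Fin h) = eα a := by
        apply Fin.ext
        show ((eα a : ℕ) + (i : ℕ) * h) % h = (eα a : ℕ)
        rw [Nat.add_mul_mod_self_right]
        exact Nat.mod_eq_of_lt (eα a).2
      rw [hfin, Equiv.symm_apply_apply]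
    refine ⟨π.1, (fun a i => σπ ((eα a : ℕ) + (i : ℕ) * h)), π.2, hinj, ?_, ?_⟩
    · intro a i j hij
      by_contra hne
      have hs : (eα a : ℕ) + (i : ℕ) * h ≠ (eα a : ℕ) + (j : ℕ) * h := by
        intro hEq
        apply hne; apply Fin.ext
        have hmul : (i : ℕ) * h = (j : ℕ) * h := by omega
        exact Nat.eq_of_mul_eq_mul_right hpos hmul
      rcases Nat.lt_or_ge ((eα a : ℕ) + (i : ℕ) * h) ((eα a : ℕ) + (j : ℕ) * h) with hlt | hge
      · exact hJ4 _ _ hlt (lt_of_lt_of_le (hslotlt a j) hL) (by rw [haof, haof]) hij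
      · have hlt2 : (eα a : ℕ) + (j : ℕ) * h < (eα a : ℕ) + (i : ℕ) * h :=
          lt_of_le_of_ne hge (Ne.symm hs)
        exact hJ4 _ _ hlt2 (lt_of_lt_of_le (hslotlt a i) hL) (by rw [haof, haof]) hij.symm
    · intro a b hab
      refine ⟨hFadj a b hab, ?_⟩
      intro i j
      have hne : (eα a : ℕ) + (i : ℕ) * h ≠ (eα b : ℕ) + (j : ℕ) * h := by
        intro hEq
        have hmod : ((eα a : ℕ) + (i : ℕ) * h) % h = ((eα b : ℕ) + (j : ℕ) * h) % h := by
          rw [hEq]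
        rw [Nat.add_mul_mod_self_right, Nat.add_mul_mod_self_right,
          Nat.mod_eq_of_lt (eα a).2, Nat.mod_eq_of_lt (eα b).2] at hmod
        exact hab.ne (eα.injective (Fin.ext hmod))
      rcases Nat.lt_or_ge ((eα a : ℕ) + (i : ℕ) * h) ((eα b : ℕ) + (j : ℕ) * h) with hlt | hge
      · have h2 := hJ2 _ _ hlt (lt_of_lt_of_le (hslotlt b j) hL)
        rw [haof a i, haof b j] at h2
        exact h2 hab
      · have hlt2 : (eα b : ℕ) + (j : ℕ) * h < (eα a : ℕ) + (i : ℕ) * h :=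
          lt_of_le_of_ne hge (Ne.symm hne)
        have h2 := hJ2 _ _ hlt2 (lt_of_lt_of_le (hslotlt a i) hL)
        rw [haof a i, haof b j] at h2
        rw [Sym2.eq_swap]
        exact h2 hab.symm
  -- main induction on fuel
  have MAIN : ∀ (fuel : ℕ) (B : U → Finset (Fin n)) (L : ((α → U) × Fin r) → ℕ)
      (σ : ((α → U) × Fin r) → ℕ → Fin n),
      (∀ u, (2 * p + 2) ^ fuel ≤ (B u).card) →
      (S + 1 ≤ fuel + ∑ π : ((α → U) × Fin r), L π) →
      (∀ π, 0 < L π → Function.Injective π.1 ∧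
        ∀ a b, H.Adj a b → F.Adj (π.1 a) (π.1 b)) →
      (∀ π i j, i < j → j < L π → H.Adj (aof i) (aof j) →
        C s((π.1 (aof i), σ π i), (π.1 (aof j), σ π j)) = π.2) →
      (∀ π i, i < L π → ∀ b, H.Adj (aof i) b → ∀ y ∈ B (π.1 b),
        C s((π.1 (aof i), σ π i), (π.1 b, y)) = π.2) →
      (∀ π i, i < L π → σ π i ∉ B (π.1 (aof i))) →
      (∀ π i j, i < j → j < L π → aof i = aof j → σ π i ≠ σ π j) →
      HasMonoCanonicalBlowup F H n t r C := by
    intro fuel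
    induction fuel with
    | zero =>
      intro B L σ hbox hcount hV hJ2 hJ3 hJ5 hJ4
      by_cases hdone : ∃ π, t * h ≤ L π
      · obtain ⟨π, hπ⟩ := hdone
        have hposL : 0 < L π := lt_of_lt_of_le (Nat.mul_pos (by omega) hpos) hπ
        exact EXTRACT π (L π) (σ π) hπ (hV π hposL).1 (hV π hposL).2 (hJ2 π) (hJ4 π)
      · push_neg at hdone
        exfalso
        have hSig : ∑ π : ((α → U) × Fin r), L π ≤ p * (t * h - 1) := by
          calc ∑ π : ((α → U) × Fin r), L π
              ≤ (Finset.univ : Finset ((α → U) × Fin r)).card • (t * h - 1) :=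
                Finset.sum_le_card_nsmul _ _ _ (fun π _ => by have := hdone π; omega)
            _ = p * (t * h - 1) := by rw [Finset.card_univ, hPatcard, smul_eq_mul]
        omega
    | succ fuel IH =>
      intro B L σ hbox hcount hV hJ2 hJ3 hJ5 hJ4
      by_cases hdone : ∃ π, t * h ≤ L π
      · obtain ⟨π, hπ⟩ := hdone
        have hposL : 0 < L π := lt_of_lt_of_le (Nat.mul_pos (by omega) hpos) hπ
        exact EXTRACT π (L π) (σ π) hπ (hV π hposL).1 (hV π hposL).2 (hJ2 π) (hJ4 π)
      push_neg at hdone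
      -- the counting step
      have hκpos : ∀ u, 0 < (B u).card :=
        fun u => lt_of_lt_of_le (pow_pos (by omega) _) (hbox u)
      set Tr := Fintype.piFinset B with hTrdef
      have hTrcard : Tr.card = ∏ u, (B u).card := Fintype.card_piFinset B
      obtain ⟨π, -, hπfib⟩ := max_fiber' Tr Finset.univ pat (fun χ _ => Finset.mem_univ _)
        Finset.univ_nonempty
      rw [Finset.card_univ, hPatcard] at hπfib
      set fib := Tr.filter (fun χ => pat χ = π) with hfibdef
      have hTrpos : 0 < Tr.card := by
        rw [hTrcard]; exact Finset.prod_pos (fun u _ => hκpos u)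
      have hfibpos : 0 < fib.card := by
        rcases Nat.eq_zero_or_pos fib.card with h0 | hgt
        · rw [h0, Nat.mul_zero] at hπfib; omega
        · exact hgt
      obtain ⟨χ₀, hχ₀⟩ := Finset.card_pos.mp hfibpos
      have hχ₀f : pat χ₀ = π := (Finset.mem_filter.mp hχ₀).2
      have hfinj : Function.Injective π.1 := by rw [← hχ₀f]; exact hpat1 χ₀
      have hFadjπ : ∀ a b, H.Adj a b → F.Adj (π.1 a) (π.1 b) := by
        intro a b hab
        have := (hpat2 χ₀ a b hab).1
        rwa [hχ₀f] at this
      set a₀ := aof (L π) with ha₀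
      set X := fib.image (fun χ => χ ∘ π.1) with hXdef
      have hXmem1 : ∀ x ∈ X, ∀ a, x a ∈ B (π.1 a) := by
        intro x hx a
        rw [hXdef] at hx
        obtain ⟨χ, hχ, rfl⟩ := Finset.mem_image.mp hx
        have hχTr := (Finset.mem_filter.mp hχ).1
        rw [hTrdef] at hχTr
        exact Fintype.mem_piFinset.mp hχTr (π.1 a)
      have hXmem2 : ∀ x ∈ X, ∀ a b, H.Adj a b → C s((π.1 a, x a), (π.1 b, x b)) = π.2 := by
        intro x hx a b hab
        rw [hXdef] at hx
        obtain ⟨χ, hχ, rfl⟩ := Finset.mem_image.mp hx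
        have h2 := (hpat2 χ a b hab).2
        rw [(Finset.mem_filter.mp hχ).2] at h2
        exact h2
      -- counting: R ≤ p * X.card
      set R := ∏ a : α, (B (π.1 a)).card with hRdef
      set Tc := ∏ u ∈ Finset.univ.filter (fun u => ¬ ∃ a, π.1 a = u), (B u).card with hTcdef
      have hTcpos : 0 < Tc := by
        rw [hTcdef]; exact Finset.prod_pos (fun u _ => hκpos u)
      have hRpos : 0 < R := by
        rw [hRdef]; exact Finset.prod_pos (fun a _ => hκpos _)
      have himgeq : Finset.univ.filter (fun u => ∃ a, π.1 a = u) = Finset.univ.image π.1 := by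
        ext u; simp [Finset.mem_filter, Finset.mem_image]
      have hTRsplit : Tr.card = R * Tc := by
        rw [hTrcard, ← Finset.prod_filter_mul_prod_filter_not Finset.univ
          (fun u => ∃ a, π.1 a = u) (fun u => (B u).card)]
        congr 1
        · rw [himgeq, Finset.prod_image (fun a _ b _ hab => hfinj hab), hRdef]
      have hfibbound : ∀ x ∈ X, (fib.filter (fun χ => χ ∘ π.1 = x)).card ≤ Tc := by
        intro x hx
        set B2 : U → Finset (Fin n) := fun u =>
          if hu : ∃ a, π.1 a = u then {x (Classical.choose hu)} else B u with hB2
        have hsub : fib.filter (fun χ => χ ∘ π.1 = x) ⊆ Fintype.piFinset B2 := by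
          intro χ hχ
          obtain ⟨hχfib, hχx⟩ := Finset.mem_filter.mp hχ
          have hχTr := (Finset.mem_filter.mp hχfib).1
          rw [hTrdef] at hχTr
          rw [Fintype.mem_piFinset]
          intro u
          rw [hB2]
          by_cases hu : ∃ a, π.1 a = u
          · simp only [dif_pos hu, Finset.mem_singleton]
            have hcomp : χ (π.1 (Classical.choose hu)) = x (Classical.choose hu) :=
              congrFun hχx _
            rw [Classical.choose_spec hu] at hcomp
            exact hcomp
          · simp only [dif_neg hu]
            exact Fintype.mem_piFinset.mp hχTr u
        calc (fib.filter (fun χ => χ ∘ π.1 = x)).card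
            ≤ (Fintype.piFinset B2).card := Finset.card_le_card hsub
          _ = ∏ u, (B2 u).card := Fintype.card_piFinset B2
          _ = Tc := by
              rw [← Finset.prod_filter_mul_prod_filter_not Finset.univ
                (fun u => ∃ a, π.1 a = u) (fun u => (B2 u).card)]
              have h1 : ∏ u ∈ Finset.univ.filter (fun u => ∃ a, π.1 a = u), (B2 u).card = 1 :=
                Finset.prod_eq_one (fun u hu => by
                  rw [hB2]; simp only [dif_pos (Finset.mem_filter.mp hu).2]
                  exact Finset.card_singleton _)
              have h2 : ∏ u ∈ Finset.univ.filter (fun u => ¬ ∃ a, π.1 a = u), (B2 u).card = Tc := by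
                rw [hTcdef]
                refine Finset.prod_congr rfl (fun u hu => ?_)
                rw [hB2]; simp only [dif_neg (Finset.mem_filter.mp hu).2]
              rw [h1, h2, one_mul]
      have hX2 : R ≤ p * X.card := by
        have h1 : fib.card ≤ X.card * Tc := by
          have := card_le_image_mul fib (fun χ => χ ∘ π.1) Tc hfibbound
          rwa [← hXdef] at this
        have h2 : Tr.card ≤ p * (X.card * Tc) := le_trans hπfib (Nat.mul_le_mul le_rfl h1)
        rw [hTRsplit] at h2
        have h3 : R * Tc ≤ (p * X.card) * Tc := by rw [mul_assoc]; exact h2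
        exact Nat.le_of_mul_le_mul_right h3 hTcpos
      have hXpos : 0 < X.card := by
        rcases Nat.eq_zero_or_pos X.card with h0 | hgt
        · rw [h0, Nat.mul_zero] at hX2; omega
        · exact hgt
      obtain ⟨v, hvB, hvmax⟩ := max_fiber' X (B (π.1 a₀)) (fun x => x a₀)
        (fun x hx => hXmem1 x hx a₀) (Finset.card_pos.mp (hκpos _))
      set Xv := X.filter (fun x => x a₀ = v) with hXvdef
      -- degree bound
      have h4 : ∀ b, H.Adj a₀ b →
          (B (π.1 b)).card ≤
            p * ((B (π.1 b)).filter (fun y => C s((π.1 a₀, v), (π.1 b, y)) = π.2)).card := by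
        intro b hab
        have hba : b ≠ a₀ := fun hEq => H.irrefl (hEq ▸ hab)
        set Nb := (B (π.1 b)).filter (fun y => C s((π.1 a₀, v), (π.1 b, y)) = π.2) with hNbdef
        have himg : Xv.image (fun x => x b) ⊆ Nb := by
          intro y hy
          obtain ⟨x, hxXv, rfl⟩ := Finset.mem_image.mp hy
          obtain ⟨hxX, hxa₀⟩ := Finset.mem_filter.mp hxXv
          rw [hNbdef, Finset.mem_filter]
          refine ⟨hXmem1 x hxX b, ?_⟩
          rw [← hxa₀]
          exact hXmem2 x hxX a₀ b hab
        set R2 := ∏ a ∈ (Finset.univ.erase a₀).erase b, (B (π.1 a)).card with hR2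
        have hR2pos : 0 < R2 := by
          rw [hR2]; exact Finset.prod_pos (fun a _ => hκpos _)
        have hfib2 : ∀ y ∈ Xv.image (fun x => x b), (Xv.filter (fun x => x b = y)).card ≤ R2 := by
          intro y hy
          set B3 : α → Finset (Fin n) := fun a =>
            if a = a₀ then {v} else if a = b then {y} else B (π.1 a) with hB3
          have hsub : Xv.filter (fun x => x b = y) ⊆ Fintype.piFinset B3 := by
            intro x hx
            obtain ⟨hxXv, hxy⟩ := Finset.mem_filter.mp hx
            obtain ⟨hxX, hxa₀⟩ := Finset.mem_filter.mp hxXv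
            rw [Fintype.mem_piFinset]
            intro a
            rw [hB3]
            by_cases ha : a = a₀
            · simp only [if_pos ha, Finset.mem_singleton]
              rw [ha]; exact hxa₀
            · simp only [if_neg ha]
              by_cases hb : a = b
              · simp only [if_pos hb, Finset.mem_singleton]
                rw [hb]; exact hxy
              · simp only [if_neg hb]
                exact hXmem1 x hxX a
          have e1 : (B3 a₀).card = 1 := by rw [hB3]; simp
          have e2 : (B3 b).card = 1 := by
            rw [hB3]; simp only [if_neg hba, if_pos rfl]
            exact Finset.card_singleton _
          calc (Xv.filter (fun x => x b = y)).card
              ≤ (Fintype.piFinset B3).card := Finset.card_le_card hsub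
            _ = ∏ a, (B3 a).card := Fintype.card_piFinset B3
            _ = R2 := by
                rw [← Finset.mul_prod_erase Finset.univ (fun a => (B3 a).card)
                  (Finset.mem_univ a₀),
                  ← Finset.mul_prod_erase (Finset.univ.erase a₀) (fun a => (B3 a).card)
                  (Finset.mem_erase.mpr ⟨hba, Finset.mem_univ b⟩)]
                rw [e1, e2, one_mul, one_mul, hR2]
                refine Finset.prod_congr rfl (fun a ha => ?_)
                have ha1 : a ≠ b := (Finset.mem_erase.mp ha).1
                have ha2 : a ≠ a₀ := (Finset.mem_erase.mp (Finset.mem_erase.mp ha).2).1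
                rw [hB3]; simp only [if_neg ha2, if_neg ha1]
        have h5 : Xv.card ≤ (Xv.image (fun x => x b)).card * R2 :=
          card_le_image_mul _ _ _ hfib2
        have h6 : Xv.card ≤ Nb.card * R2 :=
          le_trans h5 (Nat.mul_le_mul (Finset.card_le_card himg) le_rfl)
        have hRsplit : R = (B (π.1 a₀)).card * ((B (π.1 b)).card * R2) := by
          rw [hRdef, ← Finset.mul_prod_erase Finset.univ (fun a => (B (π.1 a)).card)
            (Finset.mem_univ a₀),
            ← Finset.mul_prod_erase (Finset.univ.erase a₀) (fun a => (B (π.1 a)).card)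
            (Finset.mem_erase.mpr ⟨hba, Finset.mem_univ b⟩), hR2]
        have hchain : (B (π.1 a₀)).card * ((B (π.1 b)).card * R2) ≤
            (B (π.1 a₀)).card * ((p * Nb.card) * R2) := by
          calc (B (π.1 a₀)).card * ((B (π.1 b)).card * R2) = R := hRsplit.symm
            _ ≤ p * X.card := hX2
            _ ≤ p * ((B (π.1 a₀)).card * Xv.card) := Nat.mul_le_mul le_rfl hvmax
            _ ≤ p * ((B (π.1 a₀)).card * (Nb.card * R2)) :=
                Nat.mul_le_mul le_rfl (Nat.mul_le_mul le_rfl h6)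
            _ = (B (π.1 a₀)).card * ((p * Nb.card) * R2) := by ring
        have h7 := Nat.le_of_mul_le_mul_left hchain (hκpos _)
        exact Nat.le_of_mul_le_mul_right h7 hR2pos
      -- the new box
      set B' : U → Finset (Fin n) := fun u =>
        if u = π.1 a₀ then (B u).erase v
        else if ∃ b, H.Adj a₀ b ∧ π.1 b = u then
          (B u).filter (fun y => C s((π.1 a₀, v), (u, y)) = π.2)
        else B u with hB'
      have hB'sub : ∀ u, B' u ⊆ B u := by
        intro u
        simp only [hB']
        split_ifs with h1 h2
        · exact Finset.erase_subset _ _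
        · exact Finset.filter_subset _ _
        · exact subset_rfl
      have hB'Nb : ∀ b, H.Adj a₀ b →
          B' (π.1 b) = (B (π.1 b)).filter (fun y => C s((π.1 a₀, v), (π.1 b, y)) = π.2) := by
        intro b hab
        simp only [hB']
        have hne : π.1 b ≠ π.1 a₀ := fun hEq => hab.ne (hfinj hEq).symm
        rw [if_neg hne, if_pos ⟨b, hab, rfl⟩]
      have hbox' : ∀ u, (2 * p + 2) ^ fuel ≤ (B' u).card := by
        intro u
        have hbu := hbox u
        rw [pow_succ] at hbu
        have hfp : 0 < (2 * p + 2) ^ fuel := pow_pos (by omega) _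
        simp only [hB']
        split_ifs with h1 h2
        · rw [Finset.card_erase_of_mem (by rw [h1]; exact hvB)]
          have h2' : (2 * p + 2) ^ fuel * 2 ≤ (2 * p + 2) ^ fuel * (2 * p + 2) :=
            Nat.mul_le_mul le_rfl (by omega)
          omega
        · obtain ⟨b, hab, hbu'⟩ := h2
          have h4b := h4 b hab
          rw [hbu'] at h4b
          have hkey : p * ((2 * p + 2) ^ fuel) ≤
              p * ((B u).filter (fun y => C s((π.1 a₀, v), (u, y)) = π.2)).card := by
            calc p * ((2 * p + 2) ^ fuel) = (2 * p + 2) ^ fuel * p := by ring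
              _ ≤ (2 * p + 2) ^ fuel * (2 * p + 2) := Nat.mul_le_mul le_rfl (by omega)
              _ ≤ (B u).card := hbu
              _ ≤ p * ((B u).filter (fun y => C s((π.1 a₀, v), (u, y)) = π.2)).card := h4b
          exact Nat.le_of_mul_le_mul_left hkey hppos
        · calc (2 * p + 2) ^ fuel ≤ (2 * p + 2) ^ fuel * (2 * p + 2) :=
              Nat.le_mul_of_pos_right _ (by omega)
            _ ≤ (B u).card := hbu
      -- new state
      set L' := Function.update L π (L π + 1) with hL'
      set σ' := Function.update σ π (Function.update (σ π) (L π) v) with hσ'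
      have hLπlt : L π < t * h := hdone π
      apply IH B' L' σ'
      · exact hbox'
      · -- count
        have e2 : ∑ π' : ((α → U) × Fin r), L' π' =
            (L π + 1) + ∑ x ∈ Finset.univ.erase π, L x := by
          rw [hL', Finset.sum_update_of_mem (Finset.mem_univ π),
            Finset.sdiff_singleton_eq_erase]
        have e1 : L π + ∑ x ∈ Finset.univ.erase π, L x = ∑ x : ((α → U) × Fin r), L x :=
          Finset.add_sum_erase _ _ (Finset.mem_univ π)
        omega
      · -- validity
        intro π' hpos'
        by_cases hEq : π' = π
        · subst hEq
          exact ⟨hfinj, hFadjπ⟩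
        · rw [hL', Function.update_of_ne hEq] at hpos'
          exact hV π' hpos'
      · -- J2
        intro π' i j hij hjlt hadj
        by_cases hEq : π' = π
        · subst hEq
          rw [hL', Function.update_self] at hjlt
          rw [hσ', Function.update_self]
          rcases Nat.lt_or_ge j (L π') with hj | hj
          · rw [Function.update_of_ne (by omega : i ≠ L π'),
              Function.update_of_ne (by omega : j ≠ L π')]
            exact hJ2 π' i j hij hj hadj
          · have hjeq : j = L π' := by omega
            rw [hjeq] at hadj ⊢
            rw [Function.update_of_ne (by omega : i ≠ L π'), Function.update_self]
            exact hJ3 π' i (by omega) (aof (L π')) hadj v (ha₀ ▸ hvB)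
        · rw [hL', Function.update_of_ne hEq] at hjlt
          rw [hσ', Function.update_of_ne hEq]
          exact hJ2 π' i j hij hjlt hadj
      · -- J3
        intro π' i hi b hb y hy
        by_cases hEq : π' = π
        · subst hEq
          rw [hL', Function.update_self] at hi
          rw [hσ', Function.update_self]
          rcases Nat.lt_or_ge i (L π') with hilt | hige
          · rw [Function.update_of_ne (by omega : i ≠ L π')]
            exact hJ3 π' i hilt b hb y (hB'sub _ hy)
          · have hieq : i = L π' := by omega
            subst hieq
            rw [Function.update_self]
            have hb' : H.Adj a₀ b := by rw [ha₀]; exact hb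
            rw [hB'Nb b hb'] at hy
            exact (Finset.mem_filter.mp hy).2
        · rw [hL', Function.update_of_ne hEq] at hi
          rw [hσ', Function.update_of_ne hEq]
          exact hJ3 π' i hi b hb y (hB'sub _ hy)
      · -- J5
        intro π' i hi
        by_cases hEq : π' = π
        · subst hEq
          rw [hL', Function.update_self] at hi
          rw [hσ', Function.update_self]
          rcases Nat.lt_or_ge i (L π') with hilt | hige
          · rw [Function.update_of_ne (by omega : i ≠ L π')]
            exact fun hmem => hJ5 π' i hilt (hB'sub _ hmem)
          · have hieq : i = L π' := by omega
            subst hieq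
            rw [Function.update_self, ← ha₀]
            simp only [hB', if_pos rfl]
            exact Finset.notMem_erase v _
        · rw [hL', Function.update_of_ne hEq] at hi
          rw [hσ', Function.update_of_ne hEq]
          exact fun hmem => hJ5 π' i hi (hB'sub _ hmem)
      · -- J4
        intro π' i j hij hjlt haofeq
        by_cases hEq : π' = π
        · subst hEq
          rw [hL', Function.update_self] at hjlt
          rw [hσ', Function.update_self]
          rcases Nat.lt_or_ge j (L π') with hj | hj
          · rw [Function.update_of_ne (by omega : i ≠ L π'),
              Function.update_of_ne (by omega : j ≠ L π')]
            exact hJ4 π' i j hij hj haofeq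
          · have hjeq : j = L π' := by omega
            rw [hjeq] at haofeq ⊢
            rw [Function.update_of_ne (by omega : i ≠ L π'), Function.update_self]
            intro hEq2
            apply hJ5 π' i (by omega)
            rw [haofeq, hEq2, ← ha₀]
            exact hvB
        · rw [hL', Function.update_of_ne hEq] at hjlt
          rw [hσ', Function.update_of_ne hEq]
          exact hJ4 π' i j hij hjlt haofeq
  -- initial state
  apply MAIN (S + 1) (fun _ => Finset.univ) (fun _ => 0) (fun _ _ => ⟨0, hn1⟩)
  · intro u
    rw [Finset.card_univ, Fintype.card_fin, hnS]
  · simp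
  · intro π h0
    exact absurd h0 (lt_irrefl 0)
  · intro π i j hij hjlt hadj
    exact absurd hjlt (Nat.not_lt_zero j)
  · intro π i hi
    exact absurd hi (Nat.not_lt_zero i)
  · intro π i hi
    exact absurd hi (Nat.not_lt_zero i)
  · intro π i j hij hjlt
    exact absurd hjlt (Nat.not_lt_zero j)

/-- A proper subgraph has strictly smaller (vertex count + edge count). -/
lemma measure_lt {V : Type} [Fintype V] (G : SimpleGraph V) (G' : G.Subgraph)
    [Fintype G'.verts] (hne : G' ≠ ⊤) :
    Fintype.card G'.verts + G'.coe.edgeSet.ncard < Fintype.card V + G.edgeSet.ncard := by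
  classical
  have hvle : Fintype.card G'.verts ≤ Fintype.card V :=
    Fintype.card_le_of_injective _ Subtype.val_injective
  have hmapinj : Function.Injective (Sym2.map (Subtype.val : G'.verts → V)) :=
    Sym2.map.injective Subtype.val_injective
  have himg_sub : Sym2.map (Subtype.val : G'.verts → V) '' G'.coe.edgeSet ⊆ G.edgeSet := by
    rintro e ⟨e', he', rfl⟩
    revert he'
    refine Sym2.ind (fun x y => ?_) e'
    intro he'
    have hA := (SimpleGraph.mem_edgeSet _).mp he'
    rw [SimpleGraph.Subgraph.coe_adj] at hA
    rw [Sym2.map_pair_eq, SimpleGraph.mem_edgeSet]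
    exact G'.adj_sub hA
  have himg_card : (Sym2.map (Subtype.val : G'.verts → V) '' G'.coe.edgeSet).ncard
      = G'.coe.edgeSet.ncard := Set.ncard_image_of_injective _ hmapinj
  have hele : G'.coe.edgeSet.ncard ≤ G.edgeSet.ncard := by
    rw [← himg_card]
    exact Set.ncard_le_ncard himg_sub (Set.toFinite _)
  by_cases hverts : G'.verts = Set.univ
  · -- some adjacency must differ
    have hadj : ¬ ∀ x y, G.Adj x y → G'.Adj x y := by
      intro hall
      apply hne
      apply SimpleGraph.Subgraph.ext
      · rw [hverts, SimpleGraph.Subgraph.verts_top]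
      · funext x y
        apply propext
        constructor
        · intro hxy
          exact SimpleGraph.Subgraph.top_adj.mpr (G'.adj_sub hxy)
        · intro hxy
          exact hall x y (SimpleGraph.Subgraph.top_adj.mp hxy)
    push_neg at hadj
    obtain ⟨x, y, hGxy, hG'xy⟩ := hadj
    have hxy_notin : s(x, y) ∉ Sym2.map (Subtype.val : G'.verts → V) '' G'.coe.edgeSet := by
      rintro ⟨e', he', heq⟩
      revert he' heq
      refine Sym2.ind (fun x' y' => ?_) e'
      intro he' heq
      rw [Sym2.map_pair_eq] at heq
      have hA := (SimpleGraph.mem_edgeSet _).mp he'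
      rw [SimpleGraph.Subgraph.coe_adj] at hA
      rw [Sym2.eq_iff] at heq
      rcases heq with ⟨h1, h2⟩ | ⟨h1, h2⟩
      · apply hG'xy
        rw [h1, h2] at hA
        exact hA
      · apply hG'xy
        have hA' := hA.symm
        rw [h1, h2] at hA'
        exact hA'
    have hss : Sym2.map (Subtype.val : G'.verts → V) '' G'.coe.edgeSet ⊂ G.edgeSet := by
      refine ⟨himg_sub, fun hsub => hxy_notin (hsub ((SimpleGraph.mem_edgeSet _).mpr hGxy))⟩
    have := Set.ncard_lt_ncard hss (Set.toFinite _)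
    rw [himg_card] at this
    omega
  · -- a vertex is missing
    obtain ⟨x, hx⟩ : ∃ x, x ∉ G'.verts := by
      by_contra hc
      push_neg at hc
      exact hverts (Set.eq_univ_of_forall hc)
    have : Fintype.card G'.verts < Fintype.card V := by
      apply Fintype.card_lt_of_injective_of_notMem _ Subtype.val_injective (b := x)
      rw [Subtype.range_coe_subtype]
      exact hx
    omega

lemma part1 {α : Type} [Fintype α] [Nonempty α] (H : SimpleGraph α) {r : ℕ} (hr : 1 ≤ r) :
    ∀ (m : ℕ) (V : Type) [Fintype V] (G : SimpleGraph V),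
      Fintype.card V + G.edgeSet.ncard ≤ m → ArrowsFor G H r →
      ∃ (k : ℕ) (F : SimpleGraph (Fin k)) (θ : Fin k → V),
        RamseyMinimalFor F H r ∧ Function.Injective θ ∧
        (∀ a b, F.Adj a b → G.Adj (θ a) (θ b)) := by
  intro m
  induction m with
  | zero =>
    intro V _ G hμ hG
    exfalso
    have hV0 : Fintype.card V = 0 := by omega
    haveI : IsEmpty V := Fintype.card_eq_zero_iff.mp hV0
    obtain ⟨f, c, -, -⟩ := hG (fun _ => ⟨0, hr⟩)
    exact IsEmpty.false (f (Classical.arbitrary α))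
  | succ m ih =>
    intro V _ G hμ hG
    classical
    by_cases hmin : RamseyMinimalFor G H r
    · -- transport to Fin (card V)
      set e := Fintype.equivFin V with he
      set G₀ : SimpleGraph (Fin (Fintype.card V)) := G.comap ⇑e.symm with hG₀
      have hiff : ∀ x y, G.Adj x y ↔ G₀.Adj (e x) (e y) := by
        intro x y
        rw [hG₀, SimpleGraph.comap_adj, Equiv.symm_apply_apply, Equiv.symm_apply_apply]
      have hG₀arr : ArrowsFor G₀ H r := arrows_of_equiv e hiff hmin.1
      refine ⟨Fintype.card V, G₀, ⇑e.symm, ⟨hG₀arr, ?_⟩, e.symm.injective, ?_⟩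
      · -- minimality of G₀
        intro K hKne hKarr
        -- pull K back to a subgraph of G
        set K' : G.Subgraph :=
          { verts := {v | e v ∈ K.verts}
            Adj := fun u w => K.Adj (e u) (e w)
            adj_sub := by
              intro u w huw
              have := K.adj_sub huw
              rw [hG₀, SimpleGraph.comap_adj, Equiv.symm_apply_apply,
                Equiv.symm_apply_apply] at this
              exact this
            edge_vert := by
              intro u w huw
              exact K.edge_vert huw
            symm := ⟨fun u w huw => K.symm.symm _ _ huw⟩ } with hK'
        have hK'ne : K' ≠ ⊤ := by
          intro hEq
          apply hKne
          apply SimpleGraph.Subgraph.ext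
          · rw [SimpleGraph.Subgraph.verts_top]
            apply Set.eq_univ_of_forall
            intro x
            have hx : e.symm x ∈ K'.verts := by
              rw [hEq, SimpleGraph.Subgraph.verts_top]
              exact Set.mem_univ _
            have : e (e.symm x) ∈ K.verts := hx
            rwa [Equiv.apply_symm_apply] at this
          · funext x y
            apply propext
            constructor
            · intro hxy
              exact SimpleGraph.Subgraph.top_adj.mpr (K.adj_sub hxy)
            · intro hxy
              have hxy' : G₀.Adj x y := SimpleGraph.Subgraph.top_adj.mp hxy
              have hGadj : G.Adj (e.symm x) (e.symm y) := by
                rw [hG₀, SimpleGraph.comap_adj] at hxy'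
                exact hxy'
              have hK'adj : K'.Adj (e.symm x) (e.symm y) := by
                rw [hEq]
                exact SimpleGraph.Subgraph.top_adj.mpr hGadj
              have : K.Adj (e (e.symm x)) (e (e.symm y)) := hK'adj
              rwa [Equiv.apply_symm_apply, Equiv.apply_symm_apply] at this
        apply hmin.2 K' hK'ne
        -- transfer ArrowsFor K.coe → K'.coe
        have hmemiff : ∀ x : K.verts, e.symm ↑x ∈ K'.verts := by
          intro x
          show e (e.symm ↑x) ∈ K.verts
          rw [Equiv.apply_symm_apply]
          exact x.2
        refine arrows_of_equiv (G := K.coe) (G' := K'.coe)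
          ⟨fun x => ⟨e.symm ↑x, hmemiff x⟩,
           fun y => ⟨e ↑y, y.2⟩, ?_, ?_⟩ ?_ hKarr
        · intro x
          apply Subtype.ext
          simp
        · intro y
          apply Subtype.ext
          simp
        · intro x y
          constructor
          · intro hxy
            show K'.Adj (e.symm ↑x) (e.symm ↑y)
            show K.Adj (e (e.symm ↑x)) (e (e.symm ↑y))
            rw [Equiv.apply_symm_apply, Equiv.apply_symm_apply]
            exact hxy
          · intro hxy
            have : K.Adj (e (e.symm ↑x)) (e (e.symm ↑y)) := hxy
            rwa [Equiv.apply_symm_apply, Equiv.apply_symm_apply] at this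
      · intro a b hab
        rw [hG₀, SimpleGraph.comap_adj] at hab
        exact hab
    · -- not minimal: pass to a proper subgraph
      have hsub : ∃ G' : G.Subgraph, G' ≠ ⊤ ∧ ArrowsFor G'.coe H r := by
        rw [RamseyMinimalFor] at hmin
        push_neg at hmin
        exact hmin hG
      obtain ⟨G', hne, harr⟩ := hsub
      have hμ' : Fintype.card G'.verts + G'.coe.edgeSet.ncard ≤ m := by
        have := measure_lt G G' hne
        omega
      obtain ⟨k, F, θ', hminF, hinjθ', hadjθ'⟩ := ih G'.verts G'.coe hμ' harr
      refine ⟨k, F, Subtype.val ∘ θ', hminF, Subtype.val_injective.comp hinjθ', ?_⟩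
      intro a b hab
      exact G'.adj_sub (hadjθ' a b hab)


lemma blowup_transfer {α W V : Type} (H : SimpleGraph α) (F : SimpleGraph W) (G : SimpleGraph V)
    {r n t : ℕ} (θ : W → V) (hinj : Function.Injective θ)
    (hadj : ∀ a b, F.Adj a b → G.Adj (θ a) (θ b))
    (hB : BlowupArrow F H r n t) : BlowupArrow G H r n t := by
  intro C
  obtain ⟨φ, ψ, c, hφ, hψ, hmain⟩ := hB (fun e => C (e.map (Prod.map θ id)))
  refine ⟨fun a => θ (φ a), ψ, c, fun a b hab => hφ (hinj hab), hψ, ?_⟩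
  intro a b hab
  refine ⟨hadj _ _ (hmain a b hab).1, ?_⟩
  intro i j
  have h2 := (hmain a b hab).2 i j
  simp only [] at h2
  rw [Sym2.map_pair_eq] at h2
  exact h2

/-- observation of Souza. If `H` is `r`-Ramsey-finite (only finitely many
`r`-Ramsey-minimal graphs for `H` up to isomorphism, equivalently the set of numbers of
vertices of `r`-Ramsey-minimal graphs is finite), then there is a constant `c = c(H,r)`,
independent of `G`, with `B_r(G → H; t) ≤ c^t` for all `G →_r H` and all positive `t`. -/
theorem blowup_ramsey_uniform_bound_of_ramsey_finite
    (α : Type) [Fintype α] (H : SimpleGraph α) (r : ℕ) (hr : 1 ≤ r)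
    (hfin : {n : ℕ | ∃ G : SimpleGraph (Fin n), RamseyMinimalFor G H r}.Finite) :
    ∃ c : ℝ, 0 < c ∧ ∀ (V : Type) [Fintype V] (G : SimpleGraph V), ArrowsFor G H r →
      ∀ t : ℕ, 1 ≤ t → ∃ n : ℕ, (n : ℝ) ≤ c ^ t ∧ BlowupArrow G H r n t := by
  classical
  by_cases hα : Nonempty α
  · haveI := hα
    set RM := {n : ℕ | ∃ G : SimpleGraph (Fin n), RamseyMinimalFor G H r} with hRM
    set N := sSup RM with hN
    set h := Fintype.card α with hh
    set K := (2 * (N ^ h * r) + 2) ^ ((N ^ h * r) * h + 2) with hK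
    have hKpos : 0 < K := by
      rw [hK]; exact pow_pos (by omega) _
    refine ⟨(K : ℝ), by exact_mod_cast hKpos, ?_⟩
    intro V _ G hG t ht
    obtain ⟨k, F, θ, hminF, hinjθ, hadjθ⟩ :=
      part1 H hr (Fintype.card V + G.edgeSet.ncard) V G le_rfl hG
    have hkN : k ≤ N := le_csSup hfin.bddAbove ⟨F, hminF⟩
    have hB := core H F hr hminF.1 t ht
    set q := Fintype.card (Fin k) ^ Fintype.card α * r with hq
    set n₀ := (2 * q + 2) ^ (q * (t * Fintype.card α - 1) + 2) with hn₀
    have hqN : q ≤ N ^ h * r := by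
      rw [hq, Fintype.card_fin, ← hh]
      exact Nat.mul_le_mul (Nat.pow_le_pow_left hkN h) le_rfl
    have hbound : n₀ ≤ K ^ t := by
      rw [hn₀, hK, ← pow_mul]
      have hexp : q * (t * Fintype.card α - 1) + 2 ≤ ((N ^ h * r) * h + 2) * t := by
        have h1 : q * (t * Fintype.card α - 1) ≤ (N ^ h * r) * h * t := by
          calc q * (t * Fintype.card α - 1) ≤ (N ^ h * r) * (t * h) := by
                refine Nat.mul_le_mul hqN ?_
                rw [← hh]; omega
            _ = (N ^ h * r) * h * t := by ring
        have h2 : (2 : ℕ) ≤ 2 * t := by omega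
        calc q * (t * Fintype.card α - 1) + 2 ≤ (N ^ h * r) * h * t + 2 * t := by omega
          _ = ((N ^ h * r) * h + 2) * t := by ring
      calc (2 * q + 2) ^ (q * (t * Fintype.card α - 1) + 2)
          ≤ (2 * (N ^ h * r) + 2) ^ (q * (t * Fintype.card α - 1) + 2) :=
            Nat.pow_le_pow_left (by omega) _
        _ ≤ (2 * (N ^ h * r) + 2) ^ (((N ^ h * r) * h + 2) * t) :=
            Nat.pow_le_pow_right (by omega) hexp
    refine ⟨n₀, ?_, blowup_transfer H F G θ hinjθ hadjθ hB⟩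
    calc (n₀ : ℝ) ≤ ((K ^ t : ℕ) : ℝ) := by exact_mod_cast hbound
      _ = (K : ℝ) ^ t := by push_cast; ring
  · have hemp : IsEmpty α := not_nonempty_iff.mp hα
    refine ⟨1, one_pos, ?_⟩
    intro V _ G hG t ht
    refine ⟨0, by norm_num, ?_⟩
    intro C
    exact ⟨fun a => (hemp.false a).elim, fun a => (hemp.false a).elim, ⟨0, hr⟩,
      fun a => (hemp.false a).elim, fun a => (hemp.false a).elim, fun a => (hemp.false a).elim⟩
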